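/- Let p ≥ 1, and let H : [0,1] → ℝ be a bounded measurable function with H(0) = 0 such that ∫₀¹ |H(x)|^p / x^{p-1} dx < ∞. Let L₁ = {(t, t) : t ∈ [0,1]} be the hypotenuse of the unit triangle, parametrized by arclength. Then ∫₀¹ ∫_{L₁} |H(x) - H(y)|^p / |x - y|^p d|y| dx < ∞, where for y = (t,t) ∈ L₁ the value H(y) denotes t (the projection to the x-axis) and |x - y| is the Euclidean distance between the point (x,0) and (t,t). -/

import Mathlib

open MeasureTheory Set

lemma aux_max_le_sqrt (x t : ℝ) (hx : 0 ≤ x) (ht : 0 ≤ t) :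
    max (x / Real.sqrt 2) t ≤ Real.sqrt ((x - t) ^ 2 + t ^ 2) := by
  have h2 : (0:ℝ) < Real.sqrt 2 := by positivity
  have hsq : (Real.sqrt 2) ^ 2 = 2 := Real.sq_sqrt (by norm_num)
  apply max_le
  · rw [Real.le_sqrt (by positivity) (by positivity), div_pow, hsq]
    nlinarith [sq_nonneg (x - 2*t)]
  · rw [Real.le_sqrt ht (by positivity)]
    nlinarith

lemma aux_ptwise (p : ℝ) (hp : 1 ≤ p) (b t m d : ℝ) (ht : 0 ≤ t)
    (hm : 0 < m) (hmd : m ≤ d) (htd : t ≤ d) :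
    Real.sqrt 2 * (|b - t| ^ p / d ^ p) ≤
      (Real.sqrt 2 * 2 ^ p) * (|b| ^ p / m ^ p) + Real.sqrt 2 * 2 ^ p := by
  have hp0 : 0 ≤ p := by linarith
  have hd : 0 < d := lt_of_lt_of_le hm hmd
  have hdp : 0 < d ^ p := Real.rpow_pos_of_pos hd p
  have hmp : 0 < m ^ p := Real.rpow_pos_of_pos hm p
  have h2 : |b - t| ^ p ≤ 2 ^ p * (|b| ^ p + t ^ p) := by
    have h1 : |b - t| ≤ 2 * max |b| t := by
      calc |b - t| ≤ |b| + |t| := abs_sub b t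
        _ = |b| + t := by rw [abs_of_nonneg ht]
        _ ≤ 2 * max |b| t := by
            rcases max_cases |b| t with ⟨h, h'⟩ | ⟨h, h'⟩ <;> rw [h] <;> linarith
    calc |b - t| ^ p ≤ (2 * max |b| t) ^ p :=
          Real.rpow_le_rpow (abs_nonneg _) h1 hp0
      _ = 2 ^ p * (max |b| t) ^ p := Real.mul_rpow (by norm_num) (le_max_of_le_right ht)
      _ ≤ 2 ^ p * (|b| ^ p + t ^ p) := by
          gcongr
          rcases max_cases |b| t with ⟨h, h'⟩ | ⟨h, h'⟩ <;> rw [h]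
          · nlinarith [Real.rpow_nonneg ht p]
          · nlinarith [Real.rpow_nonneg (abs_nonneg b) p]
  have hbp : (0:ℝ) ≤ |b| ^ p := Real.rpow_nonneg (abs_nonneg b) p
  have s2 : (0:ℝ) ≤ Real.sqrt 2 := Real.sqrt_nonneg 2
  have h2p : (0:ℝ) ≤ (2:ℝ) ^ p := by positivity
  calc Real.sqrt 2 * (|b - t| ^ p / d ^ p)
      ≤ Real.sqrt 2 * ((2 ^ p * (|b| ^ p + t ^ p)) / d ^ p) := by gcongr
    _ = (Real.sqrt 2 * 2 ^ p) * (|b| ^ p / d ^ p)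
        + (Real.sqrt 2 * 2 ^ p) * (t ^ p / d ^ p) := by ring
    _ ≤ (Real.sqrt 2 * 2 ^ p) * (|b| ^ p / m ^ p) + (Real.sqrt 2 * 2 ^ p) * 1 := by
        gcongr
        rw [div_le_one hdp]
        exact Real.rpow_le_rpow ht htd hp0
    _ = (Real.sqrt 2 * 2 ^ p) * (|b| ^ p / m ^ p) + Real.sqrt 2 * 2 ^ p := by ring


lemma aux_K_gt (p : ℝ) (hp : 1 < p) (a : ℝ) (ha : 0 < a) (ha1 : a ≤ 1) :
    ∫⁻ t in Ioc (0:ℝ) 1, ENNReal.ofReal ((max a t ^ p)⁻¹) ≤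
      ENNReal.ofReal (a ^ (1 - p) + a ^ (1 - p) / (p - 1)) := by
  have h0a : (0:ℝ) ≤ a := ha.le
  have hnot : (0:ℝ) ∉ Set.uIcc a 1 := by
    rw [Set.uIcc_of_le ha1]
    exact fun h => absurd h.1 (not_le.2 ha)
  rw [← Set.Ioc_union_Ioc_eq_Ioc h0a ha1,
    lintegral_union measurableSet_Ioc (Set.Ioc_disjoint_Ioc_of_le le_rfl)]
  have e1 : ∫⁻ t in Ioc (0:ℝ) a, ENNReal.ofReal ((max a t ^ p)⁻¹)
      = ENNReal.ofReal (a ^ (1 - p)) := by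
    rw [setLIntegral_congr_fun measurableSet_Ioc
      ((fun t (ht : t ∈ Ioc (0:ℝ) a) => by
        rw [max_eq_left ht.2] : ∀ t ∈ Ioc (0:ℝ) a,
          ENNReal.ofReal ((max a t ^ p)⁻¹) = ENNReal.ofReal ((a ^ p)⁻¹))),
      setLIntegral_const, Real.volume_Ioc, sub_zero, ← ENNReal.ofReal_mul (by positivity)]
    congr 1
    rw [← Real.rpow_neg h0a]
    nth_rewrite 2 [← Real.rpow_one a]
    rw [← Real.rpow_add ha]
    congr 1
    ring
  have e2 : ∫⁻ t in Ioc a 1, ENNReal.ofReal ((max a t ^ p)⁻¹)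
      ≤ ENNReal.ofReal (a ^ (1 - p) / (p - 1)) := by
    have hIntOn : IntegrableOn (fun t : ℝ => t ^ (-p)) (Ioc a 1) volume :=
      (intervalIntegrable_iff_integrableOn_Ioc_of_le ha1).mp
        (intervalIntegral.intervalIntegrable_rpow (Or.inr hnot))
    rw [setLIntegral_congr_fun measurableSet_Ioc
      ((fun t (ht : t ∈ Ioc a 1) => by
        rw [max_eq_right ht.1.le, ← Real.rpow_neg (ha.trans ht.1).le] : ∀ t ∈ Ioc a 1,
          ENNReal.ofReal ((max a t ^ p)⁻¹) = ENNReal.ofReal (t ^ (-p)))),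
      ← ofReal_integral_eq_lintegral_ofReal hIntOn
        (ae_restrict_of_forall_mem measurableSet_Ioc
          (fun t ht => Real.rpow_nonneg (ha.trans ht.1).le _)),
      ← intervalIntegral.integral_of_le ha1,
      integral_rpow (Or.inr ⟨by intro h; rw [neg_eq_iff_eq_neg] at h; simp at h; linarith, hnot⟩)]
    apply ENNReal.ofReal_le_ofReal
    rw [Real.one_rpow]
    have hle1 : a ^ (-p + 1) = a ^ (1 - p) := by congr 1; ring
    rw [hle1]
    have h1a : (1:ℝ) ≤ a ^ (1 - p) := by
      calc (1:ℝ) = a ^ (0:ℝ) := (Real.rpow_zero a).symm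
        _ ≤ a ^ (1 - p) := Real.rpow_le_rpow_of_exponent_ge ha ha1 (by linarith)
    have hd : (0:ℝ) < p - 1 := by linarith
    rw [show (-p + 1 : ℝ) = -(p - 1) by ring, div_neg,
      show -((1 - a ^ (1 - p)) / (p - 1)) = (a ^ (1 - p) - 1) / (p - 1) by ring]
    gcongr
    linarith
  calc _ ≤ ENNReal.ofReal (a ^ (1 - p)) + ENNReal.ofReal (a ^ (1 - p) / (p - 1)) := by
        rw [e1]; exact add_le_add le_rfl e2
    _ = _ := by rw [← ENNReal.ofReal_add (by positivity) (div_nonneg (by positivity) (by linarith))]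


lemma aux_K_one (a : ℝ) (ha : 0 < a) :
    ∫⁻ t in Ioc (0:ℝ) 1, ENNReal.ofReal ((max a t)⁻¹) ≤
      ENNReal.ofReal (2 * a ^ (-(2:ℝ)⁻¹)) := by
  have hptw : ∀ t ∈ Ioc (0:ℝ) 1,
      ENNReal.ofReal ((max a t)⁻¹) ≤
        ENNReal.ofReal (a ^ (-(2:ℝ)⁻¹) * t ^ (-(2:ℝ)⁻¹)) := by
    intro t ht
    apply ENNReal.ofReal_le_ofReal
    have hm : 0 < max a t := lt_max_of_lt_left ha
    have h1 : a ^ ((2:ℝ)⁻¹) * t ^ ((2:ℝ)⁻¹) ≤ max a t := by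
      calc a ^ ((2:ℝ)⁻¹) * t ^ ((2:ℝ)⁻¹)
          ≤ (max a t) ^ ((2:ℝ)⁻¹) * (max a t) ^ ((2:ℝ)⁻¹) := by
            gcongr <;>
              first
                | exact le_max_left _ _
                | exact le_max_right _ _
                | exact ht.1.le
                | exact Real.rpow_nonneg ht.1.le _
                | positivity
        _ = max a t := by
            rw [← Real.rpow_add hm]
            norm_num
    calc (max a t)⁻¹ ≤ (a ^ ((2:ℝ)⁻¹) * t ^ ((2:ℝ)⁻¹))⁻¹ := by
          apply inv_anti₀ (mul_pos (Real.rpow_pos_of_pos ha _) (Real.rpow_pos_of_pos ht.1 _)) h1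
      _ = a ^ (-(2:ℝ)⁻¹) * t ^ (-(2:ℝ)⁻¹) := by
          rw [mul_inv, ← Real.rpow_neg ha.le, ← Real.rpow_neg ht.1.le]
  calc ∫⁻ t in Ioc (0:ℝ) 1, ENNReal.ofReal ((max a t)⁻¹)
      ≤ ∫⁻ t in Ioc (0:ℝ) 1, ENNReal.ofReal (a ^ (-(2:ℝ)⁻¹) * t ^ (-(2:ℝ)⁻¹)) :=
        setLIntegral_mono_ae (by fun_prop)
          (Filter.Eventually.of_forall hptw)
    _ = ENNReal.ofReal (a ^ (-(2:ℝ)⁻¹)) * ∫⁻ t in Ioc (0:ℝ) 1,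
          ENNReal.ofReal (t ^ (-(2:ℝ)⁻¹)) := by
        simp_rw [ENNReal.ofReal_mul (Real.rpow_nonneg ha.le _)]
        rw [lintegral_const_mul' _ _ ENNReal.ofReal_ne_top]
    _ ≤ ENNReal.ofReal (a ^ (-(2:ℝ)⁻¹)) * ENNReal.ofReal 2 := by
        gcongr
        have hIntOn : IntegrableOn (fun t : ℝ => t ^ (-(2:ℝ)⁻¹)) (Ioc 0 1) volume :=
          (intervalIntegrable_iff_integrableOn_Ioc_of_le zero_le_one).mp
            (intervalIntegral.intervalIntegrable_rpow' (by norm_num))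
        rw [← ofReal_integral_eq_lintegral_ofReal hIntOn
            (ae_restrict_of_forall_mem measurableSet_Ioc
              (fun t ht => Real.rpow_nonneg ht.1.le _)),
          ← intervalIntegral.integral_of_le zero_le_one,
          integral_rpow (Or.inl (by norm_num))]
        apply ENNReal.ofReal_le_ofReal
        rw [Real.one_rpow, Real.zero_rpow (by norm_num)]
        norm_num
    _ = ENNReal.ofReal (2 * a ^ (-(2:ℝ)⁻¹)) := by
        rw [← ENNReal.ofReal_mul (Real.rpow_nonneg ha.le _), mul_comm]

lemma aux_combine (A B T S : ENNReal) (h : T ≤ S) :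
    A * T + B ≤ (A + B) * (S + 1) := by
  rw [mul_add, mul_one]
  exact add_le_add (mul_le_mul' le_self_add h) le_add_self

/-- If `p ≥ 1`, `H : [0,1] → ℝ` is bounded measurable with `H 0 = 0` and
`∫₀¹ |H x|^p / x^(p-1) dx < ∞`, then the mixed Douglas-type integral of
`|H(x) - H(y)|^p / |x-y|^p` over `[0,1] × L₁` is finite, where `L₁` is the hypotenuse
`{(t,t) : t ∈ [0,1]}` parametrized by arclength (arclength factor `√2`), `H` takes the
value `t` at the point `(t,t)` of `L₁`, and `|x - y|` is the Euclidean distance from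
`(x,0)` to `(t,t)`. -/
theorem douglas_mixed_integral_finite
    (p : ℝ) (hp : 1 ≤ p) (H : ℝ → ℝ)
    (hmeas : Measurable H)
    (hbd : ∃ M : ℝ, ∀ x ∈ Icc (0:ℝ) 1, |H x| ≤ M)
    (hH0 : H 0 = 0)
    (hfin : ∫⁻ x in Icc (0:ℝ) 1, ENNReal.ofReal (|H x| ^ p / x ^ (p - 1)) < ⊤) :
    ∫⁻ x in Icc (0:ℝ) 1, ∫⁻ t in Icc (0:ℝ) 1,
        ENNReal.ofReal (Real.sqrt 2 * (|H x - t| ^ p / Real.sqrt ((x - t) ^ 2 + t ^ 2) ^ p))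
      < ⊤ := by
  obtain ⟨M, hM⟩ := hbd
  have hM0 : 0 ≤ M := (abs_nonneg (H 0)).trans (hM 0 (by norm_num))
  have hs2 : (0:ℝ) < Real.sqrt 2 := by positivity
  set c1 : ℝ := Real.sqrt 2 * 2 ^ p with hc1
  have hc1pos : 0 < c1 := by positivity
  -- Step 1 : bound the inner integral for x ∈ Ioc 0 1
  have hinner : ∀ x ∈ Ioc (0:ℝ) 1,
      (∫⁻ t in Icc (0:ℝ) 1, ENNReal.ofReal
          (Real.sqrt 2 * (|H x - t| ^ p / Real.sqrt ((x - t) ^ 2 + t ^ 2) ^ p)))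
        ≤ ENNReal.ofReal (c1 * |H x| ^ p) *
            (∫⁻ t in Ioc (0:ℝ) 1, ENNReal.ofReal ((max (x / Real.sqrt 2) t ^ p)⁻¹))
          + ENNReal.ofReal c1 := by
    intro x hx
    have hxpos : 0 < x := hx.1
    rw [setLIntegral_congr (Ioc_ae_eq_Icc (α := ℝ) (μ := volume)).symm]
    calc ∫⁻ t in Ioc (0:ℝ) 1, ENNReal.ofReal
            (Real.sqrt 2 * (|H x - t| ^ p / Real.sqrt ((x - t) ^ 2 + t ^ 2) ^ p))
        ≤ ∫⁻ t in Ioc (0:ℝ) 1,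
            (ENNReal.ofReal (c1 * |H x| ^ p * (max (x / Real.sqrt 2) t ^ p)⁻¹)
              + ENNReal.ofReal c1) := by
          apply setLIntegral_mono_ae (by fun_prop)
          apply Filter.Eventually.of_forall
          intro t ht
          have hmpos : 0 < max (x / Real.sqrt 2) t :=
            lt_max_of_lt_left (by positivity)
          have hmd : max (x / Real.sqrt 2) t ≤ Real.sqrt ((x - t) ^ 2 + t ^ 2) :=
            aux_max_le_sqrt x t hxpos.le ht.1.le
          have htd : t ≤ Real.sqrt ((x - t) ^ 2 + t ^ 2) :=
            (le_max_right _ t).trans hmd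
          rw [← ENNReal.ofReal_add (by positivity) hc1pos.le]
          apply ENNReal.ofReal_le_ofReal
          have := aux_ptwise p hp (H x) t (max (x / Real.sqrt 2) t)
            (Real.sqrt ((x - t) ^ 2 + t ^ 2)) ht.1.le hmpos hmd htd
          calc Real.sqrt 2 * (|H x - t| ^ p / Real.sqrt ((x - t) ^ 2 + t ^ 2) ^ p)
              ≤ c1 * (|H x| ^ p / max (x / Real.sqrt 2) t ^ p) + c1 := this
            _ = c1 * |H x| ^ p * (max (x / Real.sqrt 2) t ^ p)⁻¹ + c1 := by
                rw [div_eq_mul_inv]; ring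
      _ = (∫⁻ t in Ioc (0:ℝ) 1,
            ENNReal.ofReal (c1 * |H x| ^ p * (max (x / Real.sqrt 2) t ^ p)⁻¹))
          + ENNReal.ofReal c1 * volume (Ioc (0:ℝ) 1) := by
          rw [lintegral_add_right _ measurable_const, setLIntegral_const]
      _ = ENNReal.ofReal (c1 * |H x| ^ p) *
            (∫⁻ t in Ioc (0:ℝ) 1, ENNReal.ofReal ((max (x / Real.sqrt 2) t ^ p)⁻¹))
          + ENNReal.ofReal c1 := by
          rw [Real.volume_Ioc]
          norm_num
          simp_rw [ENNReal.ofReal_mul (by positivity : (0:ℝ) ≤ c1 * |H x| ^ p)]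
          rw [lintegral_const_mul' _ _ ENNReal.ofReal_ne_top]
  -- Step 2 : a uniform bound
  obtain ⟨C, hC0, hkey⟩ : ∃ C : ℝ, 0 ≤ C ∧ ∀ x ∈ Ioc (0:ℝ) 1,
      (∫⁻ t in Icc (0:ℝ) 1, ENNReal.ofReal
          (Real.sqrt 2 * (|H x - t| ^ p / Real.sqrt ((x - t) ^ 2 + t ^ 2) ^ p)))
        ≤ ENNReal.ofReal C *
            ((ENNReal.ofReal (|H x| ^ p / x ^ (p - 1))
              + ENNReal.ofReal (x ^ (-(2:ℝ)⁻¹))) + 1) := by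
    rcases eq_or_lt_of_le hp with hp1 | hp1
    · -- case p = 1
      subst hp1
      have hs2half : (0:ℝ) < Real.sqrt 2 ^ ((2:ℝ)⁻¹) := by positivity
      refine ⟨c1 * M * (2 * Real.sqrt 2 ^ ((2:ℝ)⁻¹)) + c1, by positivity, ?_⟩
      intro x hx
      have hxpos : 0 < x := hx.1
      have ha : 0 < x / Real.sqrt 2 := by positivity
      have hA : ENNReal.ofReal (c1 * |H x| ^ (1:ℝ)) ≤ ENNReal.ofReal (c1 * M) := by
        apply ENNReal.ofReal_le_ofReal
        rw [Real.rpow_one]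
        exact mul_le_mul_of_nonneg_left (hM x ⟨hxpos.le, hx.2⟩) hc1pos.le
      have hK : (∫⁻ t in Ioc (0:ℝ) 1,
            ENNReal.ofReal ((max (x / Real.sqrt 2) t ^ (1:ℝ))⁻¹))
          ≤ ENNReal.ofReal (2 * (x / Real.sqrt 2) ^ (-(2:ℝ)⁻¹)) := by
        simp_rw [Real.rpow_one]
        exact aux_K_one _ ha
      calc (∫⁻ t in Icc (0:ℝ) 1, ENNReal.ofReal
              (Real.sqrt 2 * (|H x - t| ^ (1:ℝ) / Real.sqrt ((x - t) ^ 2 + t ^ 2) ^ (1:ℝ))))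
          ≤ ENNReal.ofReal (c1 * |H x| ^ (1:ℝ)) *
              (∫⁻ t in Ioc (0:ℝ) 1,
                ENNReal.ofReal ((max (x / Real.sqrt 2) t ^ (1:ℝ))⁻¹))
            + ENNReal.ofReal c1 := hinner x hx
        _ ≤ ENNReal.ofReal (c1 * M) *
              ENNReal.ofReal (2 * (x / Real.sqrt 2) ^ (-(2:ℝ)⁻¹))
            + ENNReal.ofReal c1 := by gcongr
        _ = ENNReal.ofReal (c1 * M * (2 * Real.sqrt 2 ^ ((2:ℝ)⁻¹)) * x ^ (-(2:ℝ)⁻¹))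
            + ENNReal.ofReal c1 := by
            rw [← ENNReal.ofReal_mul (by positivity)]
            congr 1
            rw [Real.div_rpow hxpos.le hs2.le, Real.rpow_neg hs2.le]
            have : Real.sqrt 2 ^ ((2:ℝ)⁻¹) ≠ 0 := ne_of_gt hs2half
            field_simp
                    _ = ENNReal.ofReal (c1 * M * (2 * Real.sqrt 2 ^ ((2:ℝ)⁻¹))) *
              ENNReal.ofReal (x ^ (-(2:ℝ)⁻¹)) + ENNReal.ofReal c1 := by
            rw [← ENNReal.ofReal_mul (by positivity)]
        _ ≤ (ENNReal.ofReal (c1 * M * (2 * Real.sqrt 2 ^ ((2:ℝ)⁻¹))) + ENNReal.ofReal c1)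
              * ((ENNReal.ofReal (|H x| ^ (1:ℝ) / x ^ ((1:ℝ) - 1))
                + ENNReal.ofReal (x ^ (-(2:ℝ)⁻¹))) + 1) :=
            aux_combine _ _ _ _ le_add_self
        _ = _ := by rw [← ENNReal.ofReal_add (by positivity) hc1pos.le]
    · -- case 1 < p
      have hp1' : (0:ℝ) < p - 1 := by linarith
      have hDpos : (0:ℝ) < 1 + 1 / (p - 1) := by
        have := div_pos one_pos hp1'
        linarith
      have hspow : (0:ℝ) < Real.sqrt 2 ^ (p - 1) := by positivity
      set C' : ℝ := c1 * ((1 + 1 / (p - 1)) * Real.sqrt 2 ^ (p - 1)) with hC'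
      have hC'pos : 0 < C' := by positivity
      refine ⟨C' + c1, by positivity, ?_⟩
      intro x hx
      have hxpos : 0 < x := hx.1
      have ha : 0 < x / Real.sqrt 2 := by positivity
      have ha1 : x / Real.sqrt 2 ≤ 1 := by
        rw [div_le_one hs2]
        calc x ≤ 1 := hx.2
          _ ≤ Real.sqrt 2 := by
            rw [show (1:ℝ) = Real.sqrt 1 by rw [Real.sqrt_one]]
            exact Real.sqrt_le_sqrt (by norm_num)
      have hKgt := aux_K_gt p hp1 _ ha ha1
      have halg : c1 * |H x| ^ p *
          ((x / Real.sqrt 2) ^ (1 - p) + (x / Real.sqrt 2) ^ (1 - p) / (p - 1))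
          = C' * (|H x| ^ p / x ^ (p - 1)) := by
        have e1 : (x / Real.sqrt 2) ^ ((1:ℝ) - p)
            = (x ^ (p - 1))⁻¹ * Real.sqrt 2 ^ (p - 1) := by
          rw [Real.div_rpow hxpos.le hs2.le,
            show ((1:ℝ) - p) = -(p - 1) by ring,
            Real.rpow_neg hxpos.le, Real.rpow_neg hs2.le]
          have : Real.sqrt 2 ^ (p - 1) ≠ 0 := ne_of_gt hspow
          field_simp
        rw [e1, hC', div_eq_mul_inv (|H x| ^ p)]
        field_simp
      calc (∫⁻ t in Icc (0:ℝ) 1, ENNReal.ofReal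
              (Real.sqrt 2 * (|H x - t| ^ p / Real.sqrt ((x - t) ^ 2 + t ^ 2) ^ p)))
          ≤ ENNReal.ofReal (c1 * |H x| ^ p) *
              (∫⁻ t in Ioc (0:ℝ) 1,
                ENNReal.ofReal ((max (x / Real.sqrt 2) t ^ p)⁻¹))
            + ENNReal.ofReal c1 := hinner x hx
        _ ≤ ENNReal.ofReal (c1 * |H x| ^ p) *
              ENNReal.ofReal ((x / Real.sqrt 2) ^ (1 - p)
                + (x / Real.sqrt 2) ^ (1 - p) / (p - 1))
            + ENNReal.ofReal c1 := by gcongr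
        _ = ENNReal.ofReal (C' * (|H x| ^ p / x ^ (p - 1))) + ENNReal.ofReal c1 := by
            rw [← ENNReal.ofReal_mul (by positivity), halg]
        _ = ENNReal.ofReal C' * ENNReal.ofReal (|H x| ^ p / x ^ (p - 1))
            + ENNReal.ofReal c1 := by
            rw [← ENNReal.ofReal_mul hC'pos.le]
        _ ≤ (ENNReal.ofReal C' + ENNReal.ofReal c1)
              * ((ENNReal.ofReal (|H x| ^ p / x ^ (p - 1))
                + ENNReal.ofReal (x ^ (-(2:ℝ)⁻¹))) + 1) :=
            aux_combine _ _ _ _ le_self_add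
        _ = _ := by rw [← ENNReal.ofReal_add hC'pos.le hc1pos.le]
  -- Step 3 : conclude
  rw [setLIntegral_congr (Ioc_ae_eq_Icc (α := ℝ) (μ := volume)).symm]
  calc ∫⁻ x in Ioc (0:ℝ) 1, ∫⁻ t in Icc (0:ℝ) 1, ENNReal.ofReal
          (Real.sqrt 2 * (|H x - t| ^ p / Real.sqrt ((x - t) ^ 2 + t ^ 2) ^ p))
      ≤ ∫⁻ x in Ioc (0:ℝ) 1, ENNReal.ofReal C *
            ((ENNReal.ofReal (|H x| ^ p / x ^ (p - 1))
              + ENNReal.ofReal (x ^ (-(2:ℝ)⁻¹))) + 1) := by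
        apply setLIntegral_mono_ae (by fun_prop)
        exact Filter.Eventually.of_forall hkey
    _ = ENNReal.ofReal C * ∫⁻ x in Ioc (0:ℝ) 1,
            ((ENNReal.ofReal (|H x| ^ p / x ^ (p - 1))
              + ENNReal.ofReal (x ^ (-(2:ℝ)⁻¹))) + 1) :=
        lintegral_const_mul' _ _ ENNReal.ofReal_ne_top
    _ < ⊤ := by
        apply ENNReal.mul_lt_top ENNReal.ofReal_lt_top
        rw [lintegral_add_right _ measurable_const,
          lintegral_add_right _ (by fun_prop)]
        apply ENNReal.add_lt_top.2
        constructor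
        · apply ENNReal.add_lt_top.2
          constructor
          · exact lt_of_le_of_lt (lintegral_mono_set Ioc_subset_Icc_self) hfin
          · have hIntOn : IntegrableOn (fun t : ℝ => t ^ (-(2:ℝ)⁻¹)) (Ioc 0 1) volume :=
              (intervalIntegrable_iff_integrableOn_Ioc_of_le zero_le_one).mp
                (intervalIntegral.intervalIntegrable_rpow' (by norm_num))
            exact hIntOn.setLIntegral_lt_top
        · simp [Real.volume_Ioc]
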